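/- Consider the random-field Ising model: in addition to arbitrary interactions J_B (B ∈ 𝔅, each B with |B| ≥ 2, deterministic or random with any densities), each site i ∈ V carries an independent Gaussian random field h_i ~ N(J_0, Λ²) with Λ > 0. Define the spin-glass order parameter q = (1/|V|) ∑_{i∈V} E[ ⟨σ_i⟩² ]. Then q has the finite lower bound E[ tanh²(β h) ]_{N(0, Λ²)} ≤ q, where the left-hand side is the expectation of tanh²(β x) under a centered Gaussian with variance Λ² and is independent of J_0 and of all the interactions J_B. -/

import Mathlib

open MeasureTheory Real Finset ProbabilityTheory

/-- The spin value of a Boolean: `true ↦ 1`, `false ↦ -1`. -/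
noncomputable def spinVal (b : Bool) : ℝ := if b then 1 else -1

/-- `σ_B = ∏ i ∈ B, σ_i`. -/
noncomputable def sigmaSet {V : Type} (σ : V → Bool) (B : Finset V) : ℝ :=
  ∏ i ∈ B, spinVal (σ i)

/-- The Gibbs average `⟨σ_i⟩` of the spin at site `i`, for the random-field Ising model
with Hamiltonian `H(σ) = -∑_{B ∈ ℬ} J_B σ_B - ∑_{j ∈ V} h_j σ_j`. -/
noncomputable def rfGibbs {V : Type} [Fintype V] [DecidableEq V] (β : ℝ)
    (ℬ : Finset (Finset V)) (J : ℬ → ℝ) (h : V → ℝ) (i : V) : ℝ :=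
  (∑ σ : V → Bool, spinVal (σ i) *
      Real.exp (β * ((∑ B : ℬ, J B * sigmaSet σ (B : Finset V)) + ∑ j, h j * spinVal (σ j)))) /
  (∑ σ : V → Bool,
      Real.exp (β * ((∑ B : ℬ, J B * sigmaSet σ (B : Finset V)) + ∑ j, h j * spinVal (σ j))))

lemma tanh_abs_lt_one (x : ℝ) : |Real.tanh x| < 1 := by
  rw [abs_lt, Real.tanh_eq_sinh_div_cosh]
  constructor
  · rw [neg_lt, ← neg_div]
    refine (div_lt_one (Real.cosh_pos x)).mpr ?_
    have := Real.sinh_lt_cosh (-x)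
    simpa using this
  · exact (div_lt_one (Real.cosh_pos x)).mpr (Real.sinh_lt_cosh x)

lemma tanh_sq_le_one (x : ℝ) : Real.tanh x ^ 2 ≤ 1 := by
  nlinarith [tanh_abs_lt_one x, abs_nonneg (Real.tanh x), sq_abs (Real.tanh x)]

lemma myHasDerivAt_tanh (x : ℝ) : HasDerivAt Real.tanh (1 / Real.cosh x ^ 2) x := by
  have h := (Real.hasDerivAt_sinh x).div (Real.hasDerivAt_cosh x) (Real.cosh_pos x).ne'
  have hfun : Real.tanh = fun y => Real.sinh y / Real.cosh y :=
    funext fun y => Real.tanh_eq_sinh_div_cosh y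
  rw [hfun]
  refine h.congr_deriv ?_
  have h2 := Real.cosh_sq_sub_sinh_sq x
  rw [div_left_inj' (pow_ne_zero 2 (Real.cosh_pos x).ne')]
  nlinarith [h2]

/-- derivative of `tanh ^ 2`. -/
noncomputable def tanhSqDeriv (u : ℝ) : ℝ := 2 * Real.tanh u / Real.cosh u ^ 2

lemma tanhSqDeriv_neg (u : ℝ) : tanhSqDeriv (-u) = - tanhSqDeriv u := by
  simp [tanhSqDeriv, Real.tanh_neg, Real.cosh_neg, neg_div]

lemma abs_tanhSqDeriv_le (u : ℝ) : |tanhSqDeriv u| ≤ 2 := by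
  have h1 : (1:ℝ) ≤ Real.cosh u := Real.one_le_cosh u
  have h2 : |Real.tanh u| < 1 := tanh_abs_lt_one u
  rw [tanhSqDeriv, abs_div, abs_mul]
  have h3 : |Real.cosh u ^ 2| = Real.cosh u ^ 2 := abs_of_pos (by positivity)
  rw [h3]
  rw [div_le_iff₀ (by positivity)]
  have : |(2:ℝ)| = 2 := by norm_num
  nlinarith [abs_nonneg (Real.tanh u)]

lemma tanh_nonneg' {u : ℝ} (hu : 0 ≤ u) : 0 ≤ Real.tanh u := by
  rw [Real.tanh_eq_sinh_div_cosh]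
  exact div_nonneg (Real.sinh_nonneg_iff.mpr hu) (Real.cosh_pos u).le

lemma tanhSqDeriv_nonneg {u : ℝ} (hu : 0 ≤ u) : 0 ≤ tanhSqDeriv u := by
  have h := tanh_nonneg' hu
  have h2 := (Real.cosh_pos u)
  rw [tanhSqDeriv]
  positivity

lemma continuous_tanh' : Continuous Real.tanh := by
  have hfun : Real.tanh = fun y => Real.sinh y / Real.cosh y :=
    funext fun y => Real.tanh_eq_sinh_div_cosh y
  rw [hfun]
  exact Real.continuous_sinh.div Real.continuous_cosh fun x => (Real.cosh_pos x).ne'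

lemma continuous_tanhSqDeriv : Continuous tanhSqDeriv := by
  exact ((continuous_const.mul continuous_tanh').div (Real.continuous_cosh.pow 2)
    fun x => by positivity)

lemma continuous_tanhsq_shift (β a : ℝ) :
    Continuous fun x => Real.tanh (β * x + a) ^ 2 :=
  (continuous_tanh'.comp (by continuity)).pow 2

lemma continuous_tanhsq_shift' (β x : ℝ) :
    Continuous fun a => Real.tanh (β * x + a) ^ 2 :=
  (continuous_tanh'.comp (by continuity)).pow 2

lemma hasDerivAt_tanhsq_shift (β : ℝ) (x a : ℝ) :
    HasDerivAt (fun a => Real.tanh (β * x + a) ^ 2) (tanhSqDeriv (β * x + a)) a := by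
  have h1 : HasDerivAt (fun a : ℝ => β * x + a) 1 a := (hasDerivAt_id a).const_add (β * x)
  have h2 := (myHasDerivAt_tanh (β * x + a)).comp a h1
  have h3 := h2.pow 2
  refine h3.congr_deriv ?_
  simp [tanhSqDeriv]
  ring

lemma integrable_tanhsq (β a : ℝ) (μ : Measure ℝ) [IsProbabilityMeasure μ] :
    Integrable (fun x => Real.tanh (β * x + a) ^ 2) μ := by
  refine Integrable.mono' (integrable_const 1) ?_ (ae_of_all _ fun x => ?_)
  · exact (continuous_tanhsq_shift β a).aestronglyMeasurable
  · rw [Real.norm_eq_abs, abs_of_nonneg (by positivity)]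
    exact tanh_sq_le_one _

lemma hasDerivAt_F (β : ℝ) (v : NNReal) (a : ℝ) :
    HasDerivAt (fun a => ∫ x, Real.tanh (β * x + a) ^ 2 ∂gaussianReal 0 v)
      (∫ x, tanhSqDeriv (β * x + a) ∂gaussianReal 0 v) a := by
  have h := hasDerivAt_integral_of_dominated_loc_of_deriv_le (μ := gaussianReal 0 v)
    (F := fun a x => Real.tanh (β * x + a) ^ 2) (F' := fun a x => tanhSqDeriv (β * x + a))
    (bound := fun _ => 2) (x₀ := a) (s := Metric.ball a 1) (Metric.ball_mem_nhds a one_pos)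
    (Filter.Eventually.of_forall fun a =>
      (continuous_tanhsq_shift β a).aestronglyMeasurable)
    (integrable_tanhsq β a _)
    ((continuous_tanhSqDeriv.comp (by continuity)).aestronglyMeasurable)
    (ae_of_all _ fun x b _ => by
      rw [Real.norm_eq_abs]; exact abs_tanhSqDeriv_le _)
    (integrable_const 2)
    (ae_of_all _ fun x b _ => hasDerivAt_tanhsq_shift β x b)
  exact h.2

lemma gaussianPDFReal_neg (a : ℝ) (s : NNReal) (x : ℝ) :
    gaussianPDFReal a s (-x) = gaussianPDFReal (-a) s x := by
  simp only [gaussianPDFReal]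
  ring_nf

lemma pdf_sub_nonneg {a : ℝ} (ha : 0 ≤ a) (s : NNReal) {x : ℝ} (hx : 0 ≤ x) :
    gaussianPDFReal a s (-x) ≤ gaussianPDFReal a s x := by
  simp only [gaussianPDFReal]
  refine mul_le_mul_of_nonneg_left (Real.exp_le_exp.mpr ?_) (by positivity)
  rcases eq_or_ne (s : ℝ) 0 with h | h
  · simp [h]
  · have hs : (0:ℝ) < (s:ℝ) := lt_of_le_of_ne s.2 (Ne.symm h)
    have hnum : -(-x - a)^2 ≤ -(x - a)^2 := by nlinarith
    exact (div_le_div_iff_of_pos_right (show (0:ℝ) < 2*s by positivity)).mpr hnum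

lemma D_nonneg {β : ℝ} (hβ : 0 < β) {v : NNReal} (hv : v ≠ 0) {a : ℝ} (ha : 0 ≤ a) :
    0 ≤ ∫ x, tanhSqDeriv (β * x + a) ∂gaussianReal 0 v := by
  set s : NNReal := ⟨β ^ 2, sq_nonneg _⟩ * v with hs_def
  have hs : s ≠ 0 := by
    rw [hs_def]; refine mul_ne_zero_iff.mpr ?_
    constructor
    · intro h
      have := congrArg (fun t : NNReal => (t : ℝ)) h
      change β ^ 2 = 0 at this
      exact hβ.ne' (by nlinarith)
    · exact hv
  have hmap : (gaussianReal 0 v).map (fun x => β * x + a) = gaussianReal a s := by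
    have h1 : (fun x : ℝ => β * x + a) = (fun x => x + a) ∘ (fun x => β * x) := rfl
    rw [h1, ← Measure.map_map (by fun_prop) (by fun_prop),
      gaussianReal_map_const_mul β, gaussianReal_map_add_const a]
    norm_num
    rfl
  have heq : ∫ x, tanhSqDeriv (β * x + a) ∂gaussianReal 0 v
      = ∫ u, tanhSqDeriv u ∂gaussianReal a s := by
    rw [← hmap, integral_map (by fun_prop) continuous_tanhSqDeriv.aestronglyMeasurable]
  rw [heq, gaussianReal_of_var_ne_zero a hs]
  have hpdf_eq : gaussianPDF a s = fun x => ((Real.toNNReal (gaussianPDFReal a s x) : NNReal) : ENNReal) := rfl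
  rw [hpdf_eq, integral_withDensity_eq_integral_smul
    ((measurable_gaussianPDFReal a s).real_toNNReal) _]
  have hsmul : ∀ x, (Real.toNNReal (gaussianPDFReal a s x)) • tanhSqDeriv x
      = tanhSqDeriv x * gaussianPDFReal a s x := fun x => by
    rw [NNReal.smul_def, Real.coe_toNNReal _ (gaussianPDFReal_nonneg a s x), smul_eq_mul]
    ring
  simp_rw [hsmul]
  set f : ℝ → ℝ := fun x => tanhSqDeriv x * gaussianPDFReal a s x with hf
  have hint : ∀ b : ℝ, Integrable (fun x => tanhSqDeriv x * gaussianPDFReal b s x) := by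
    intro b
    exact Integrable.bdd_mul (integrable_gaussianPDFReal b s)
      continuous_tanhSqDeriv.aestronglyMeasurable (ae_of_all _ fun x => by rw [Real.norm_eq_abs]; exact abs_tanhSqDeriv_le x)
  have hfneg : (fun x => f (-x)) = fun x => (- tanhSqDeriv x) * gaussianPDFReal (-a) s x := by
    funext x
    rw [hf]
    simp only [tanhSqDeriv_neg, gaussianPDFReal_neg]
  have hkey : ∀ x, 0 ≤ f x + f (-x) := by
    intro x
    have h1 : f x + f (-x) = tanhSqDeriv x * (gaussianPDFReal a s x - gaussianPDFReal a s (-x)) := by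
      rw [hf]
      simp only [tanhSqDeriv_neg]
      ring
    rw [h1]
    rcases le_total 0 x with hx | hx
    · exact mul_nonneg (tanhSqDeriv_nonneg hx) (sub_nonneg.mpr (pdf_sub_nonneg ha s hx))
    · have h1' : tanhSqDeriv x ≤ 0 := by
        have := tanhSqDeriv_nonneg (neg_nonneg.mpr hx)
        rw [tanhSqDeriv_neg] at this
        linarith
      have h2' : gaussianPDFReal a s x - gaussianPDFReal a s (-x) ≤ 0 := by
        have := pdf_sub_nonneg ha s (neg_nonneg.mpr hx)
        rw [neg_neg] at this
        linarith
      nlinarith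
  have hfnegint : Integrable (fun x => f (-x)) := by
    rw [hfneg]
    exact ((hint (-a)).neg' ).congr (by
      refine ae_of_all _ fun x => ?_
      ring)
  have h2 : ∫ x, f (-x) = ∫ x, f x := integral_neg_eq_self f volume
  have h3 : 0 ≤ ∫ x, (f x + f (-x)) := integral_nonneg hkey
  rw [integral_add (hint a) hfnegint, h2] at h3
  linarith

lemma F_even (β : ℝ) (v : NNReal) (a : ℝ) :
    ∫ x, Real.tanh (β * x + -a) ^ 2 ∂gaussianReal 0 v
      = ∫ x, Real.tanh (β * x + a) ^ 2 ∂gaussianReal 0 v := by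
  have hneg : (gaussianReal 0 v).map (fun x : ℝ => -1 * x) = gaussianReal 0 v := by
    rw [gaussianReal_map_const_mul (-1)]
    norm_num
  calc ∫ x, Real.tanh (β * x + -a) ^ 2 ∂gaussianReal 0 v
      = ∫ x, Real.tanh (β * x + -a) ^ 2 ∂((gaussianReal 0 v).map (fun x => -1 * x)) := by
        rw [hneg]
    _ = ∫ x, Real.tanh (β * (-1 * x) + -a) ^ 2 ∂gaussianReal 0 v := by
        rw [integral_map (by fun_prop) (continuous_tanhsq_shift β (-a)).aestronglyMeasurable]
    _ = ∫ x, Real.tanh (β * x + a) ^ 2 ∂gaussianReal 0 v := by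
        congr 1
        funext x
        have : β * (-1 * x) + -a = -(β * x + a) := by ring
        rw [this, Real.tanh_neg, neg_pow]
        norm_num

lemma F_min {β : ℝ} (hβ : 0 < β) {v : NNReal} (hv : v ≠ 0) (a : ℝ) :
    ∫ x, Real.tanh (β * x) ^ 2 ∂gaussianReal 0 v
      ≤ ∫ x, Real.tanh (β * x + a) ^ 2 ∂gaussianReal 0 v := by
  set F : ℝ → ℝ := fun a => ∫ x, Real.tanh (β * x + a) ^ 2 ∂gaussianReal 0 v with hF
  have h0 : ∫ x, Real.tanh (β * x) ^ 2 ∂gaussianReal 0 v = F 0 := by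
    simp [hF]
  have hder := hasDerivAt_F β v
  have hmono : MonotoneOn F (Set.Ici 0) := by
    apply monotoneOn_of_deriv_nonneg (convex_Ici 0)
    · exact (Continuous.continuousOn (by
        exact continuous_iff_continuousAt.mpr fun b => (hder b).continuousAt))
    · exact fun b _ => (hder b).differentiableAt.differentiableWithinAt
    · intro b hb
      rw [interior_Ici, Set.mem_Ioi] at hb
      rw [(hder b).deriv]
      exact D_nonneg hβ hv hb.le
  rw [h0]
  rcases le_total 0 a with h | h
  · exact hmono Set.self_mem_Ici h h
  · have := hmono Set.self_mem_Ici (Set.mem_Ici.mpr (neg_nonneg.mpr h)) (neg_nonneg.mpr h)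
    calc F 0 ≤ F (-a) := this
      _ = F a := F_even β v a

lemma key_gauss_bound {β : ℝ} (hβ : 0 < β) {v : NNReal} (hv : v ≠ 0) (J0 C : ℝ) :
    ∫ x, Real.tanh (β * x) ^ 2 ∂gaussianReal 0 v
      ≤ ∫ t, Real.tanh (β * t + C) ^ 2 ∂gaussianReal J0 v := by
  have hmap : (gaussianReal 0 v).map (· + J0) = gaussianReal J0 v := by
    simpa using gaussianReal_map_add_const (μ := 0) (v := v) J0
  rw [← hmap, integral_map (by fun_prop) (continuous_tanhsq_shift β C).aestronglyMeasurable]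
  have : (fun x => Real.tanh (β * (x + J0) + C) ^ 2)
      = fun x => Real.tanh (β * x + (β * J0 + C)) ^ 2 := by
    funext x
    ring_nf
  rw [this]
  exact F_min hβ hv _

noncomputable def Zpart {V : Type} [Fintype V] [DecidableEq V] (β : ℝ)
    (ℬ : Finset (Finset V)) (J : ℬ → ℝ) (h : V → ℝ) (i : V) (b : Bool) : ℝ :=
  ∑ σ ∈ Finset.univ.filter (fun σ : V → Bool => σ i = b),
    Real.exp (β * ((∑ B : ℬ, J B * sigmaSet σ (B : Finset V)) +
      ∑ j ∈ Finset.univ.erase i, h j * spinVal (σ j)))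

variable {V : Type} [Fintype V] [DecidableEq V]

lemma Zpart_pos (β : ℝ) (ℬ : Finset (Finset V)) (J : ℬ → ℝ) (h : V → ℝ) (i : V) (b : Bool) :
    0 < Zpart β ℬ J h i b := by
  apply Finset.sum_pos (fun σ _ => Real.exp_pos _)
  refine ⟨fun _ => b, Finset.mem_filter.mpr ⟨Finset.mem_univ _, rfl⟩⟩

lemma Zpart_congr (β : ℝ) (ℬ : Finset (Finset V)) (J : ℬ → ℝ) {h h' : V → ℝ} (i : V) (b : Bool)
    (hh : ∀ j, j ≠ i → h j = h' j) : Zpart β ℬ J h i b = Zpart β ℬ J h' i b := by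
  unfold Zpart
  refine Finset.sum_congr rfl fun σ _ => ?_
  have heq : ∑ j ∈ Finset.univ.erase i, h j * spinVal (σ j)
      = ∑ j ∈ Finset.univ.erase i, h' j * spinVal (σ j) :=
    Finset.sum_congr rfl fun j hj => by rw [hh j (Finset.ne_of_mem_erase hj)]
  rw [heq]

lemma tanh_form {A B : ℝ} (hA : 0 < A) (hB : 0 < B) (x : ℝ) :
    (Real.exp x * A - Real.exp (-x) * B) / (Real.exp x * A + Real.exp (-x) * B)
      = Real.tanh (x + Real.log (A / B) / 2) := by
  set t := x + Real.log (A / B) / 2 with ht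
  have hs : Real.exp t = Real.exp x * Real.exp (Real.log (A / B) / 2) := by
    rw [ht, Real.exp_add]
  set s := Real.exp (Real.log (A / B) / 2) with hsdef
  have hs_pos : 0 < s := Real.exp_pos _
  have hs2 : s ^ 2 = A / B := by
    rw [hsdef, ← Real.exp_nat_mul]
    push_cast
    rw [show (2:ℝ) * (Real.log (A / B) / 2) = Real.log (A / B) by ring]
    exact Real.exp_log (div_pos hA hB)
  have hA2 : A = s ^ 2 * B := by
    rw [hs2]
    field_simp
  rw [Real.tanh_eq_sinh_div_cosh, Real.sinh_eq, Real.cosh_eq, hs,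
    Real.exp_neg, Real.exp_neg, hs, hA2]
  have hex : 0 < Real.exp x := Real.exp_pos x
  have h1 : Real.exp x ≠ 0 := hex.ne'
  have h2 : s ≠ 0 := hs_pos.ne'
  have h3 : Real.exp x * s ≠ 0 := by positivity
  field_simp

lemma gibbs_split (β : ℝ) (ℬ : Finset (Finset V)) (J : ℬ → ℝ) (h : V → ℝ) (i : V)
    (g : Bool → ℝ) :
    (∑ σ : V → Bool, g (σ i) *
        Real.exp (β * ((∑ B : ℬ, J B * sigmaSet σ (B : Finset V)) + ∑ j, h j * spinVal (σ j))))
      = g true * Real.exp (β * h i) * Zpart β ℬ J h i true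
        + g false * Real.exp (-(β * h i)) * Zpart β ℬ J h i false := by
  have hsplit : ∀ σ : V → Bool,
      β * ((∑ B : ℬ, J B * sigmaSet σ (B : Finset V)) + ∑ j, h j * spinVal (σ j))
        = β * h i * spinVal (σ i) + β * ((∑ B : ℬ, J B * sigmaSet σ (B : Finset V)) +
            ∑ j ∈ Finset.univ.erase i, h j * spinVal (σ j)) := by
    intro σ
    rw [← Finset.add_sum_erase Finset.univ (fun j => h j * spinVal (σ j)) (Finset.mem_univ i)]
    ring
  rw [← Finset.sum_filter_add_sum_filter_not Finset.univ (fun σ : V → Bool => σ i = true)]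
  have hfil : Finset.univ.filter (fun σ : V → Bool => ¬ σ i = true)
      = Finset.univ.filter (fun σ : V → Bool => σ i = false) := by
    apply Finset.filter_congr
    intro σ _
    simp [Bool.not_eq_true]
  congr 1
  · rw [Zpart, Finset.mul_sum]
    refine Finset.sum_congr rfl fun σ hσ => ?_
    have hσi : σ i = true := by simpa using (Finset.mem_filter.mp hσ).2
    rw [hsplit σ, Real.exp_add, hσi]
    simp only [spinVal, if_true]
    ring
  · rw [hfil, Zpart, Finset.mul_sum]
    refine Finset.sum_congr rfl fun σ hσ => ?_
    have hσi : σ i = false := by simpa using (Finset.mem_filter.mp hσ).2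
    rw [hsplit σ, Real.exp_add, hσi]
    simp only [spinVal, if_false, Bool.false_eq_true]
    ring

lemma rfGibbs_eq_tanh (β : ℝ) (ℬ : Finset (Finset V)) (J : ℬ → ℝ) (h : V → ℝ) (i : V) :
    rfGibbs β ℬ J h i = Real.tanh (β * h i +
      Real.log (Zpart β ℬ J h i true / Zpart β ℬ J h i false) / 2) := by
  have hnum := gibbs_split β ℬ J h i spinVal
  have hden := gibbs_split β ℬ J h i (fun _ => 1)
  simp only [one_mul] at hden
  rw [rfGibbs, hnum, hden]
  have h1 : spinVal true * Real.exp (β * h i) * Zpart β ℬ J h i true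
      + spinVal false * Real.exp (-(β * h i)) * Zpart β ℬ J h i false
      = Real.exp (β * h i) * Zpart β ℬ J h i true
        - Real.exp (-(β * h i)) * Zpart β ℬ J h i false := by
    simp only [spinVal, if_true, if_false, Bool.false_eq_true]
    ring
  rw [h1]
  exact tanh_form (Zpart_pos β ℬ J h i true) (Zpart_pos β ℬ J h i false) (β * h i)

lemma rfGibbs_sq_le_one (β : ℝ) (ℬ : Finset (Finset V)) (J : ℬ → ℝ) (h : V → ℝ) (i : V)
    (htanh : ∀ x : ℝ, Real.tanh x ^ 2 ≤ 1) :
    rfGibbs β ℬ J h i ^ 2 ≤ 1 := by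
  rw [rfGibbs_eq_tanh]
  exact htanh _

lemma rfGibbs_measurable (β : ℝ) (ℬ : Finset (Finset V)) (i : V) :
    Measurable (fun p : (ℬ → ℝ) × (V → ℝ) => rfGibbs β ℬ p.1 p.2 i) := by
  unfold rfGibbs
  apply Measurable.div
  · apply Finset.measurable_sum
    intro σ _
    apply Measurable.const_mul
    apply Real.measurable_exp.comp
    apply Measurable.const_mul
    apply Measurable.add
    · apply Finset.measurable_sum
      intro B _
      exact ((measurable_pi_apply B).comp measurable_fst).mul_const _
    · apply Finset.measurable_sum
      intro j _
      exact ((measurable_pi_apply j).comp measurable_snd).mul_const _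
  · apply Finset.measurable_sum
    intro σ _
    apply Real.measurable_exp.comp
    apply Measurable.const_mul
    apply Measurable.add
    · apply Finset.measurable_sum
      intro B _
      exact ((measurable_pi_apply B).comp measurable_fst).mul_const _
    · apply Finset.measurable_sum
      intro j _
      exact ((measurable_pi_apply j).comp measurable_snd).mul_const _


lemma inner_bound {V : Type} [Fintype V] [DecidableEq V] {β : ℝ} (hβ : 0 < β)
    (ℬ : Finset (Finset V)) (J : ℬ → ℝ) (J0 : ℝ) {Λ : NNReal} (hΛ : Λ ≠ 0) (i : V) :
    ∫ x, Real.tanh (β * x) ^ 2 ∂gaussianReal 0 (Λ ^ 2)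
      ≤ ∫ h, rfGibbs β ℬ J h i ^ 2 ∂(Measure.pi fun _ : V => gaussianReal J0 (Λ ^ 2)) := by
  classical
  have hv : (Λ ^ 2 : NNReal) ≠ 0 := pow_ne_zero _ hΛ
  haveI hU : Unique {j : V // j = i} := ⟨⟨⟨i, rfl⟩⟩, fun j => Subtype.ext j.2⟩
  set ν1 : Measure ℝ := gaussianReal J0 (Λ ^ 2) with hν1
  set P1 : Measure ({j : V // j = i} → ℝ) := Measure.pi fun _ => ν1 with hP1
  set P2 : Measure ({j : V // ¬ j = i} → ℝ) := Measure.pi fun _ => ν1 with hP2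
  set e := MeasurableEquiv.piEquivPiSubtypeProd (fun _ : V => ℝ) (fun j => j = i) with he
  have hMP : MeasurePreserving e (Measure.pi fun _ : V => ν1) (P1.prod P2) := by
    convert measurePreserving_piEquivPiSubtypeProd (fun _ : V => ν1) (fun j => j = i)
  have hgm : Measurable fun h : V → ℝ => rfGibbs β ℬ J h i ^ 2 :=
    (((rfGibbs_measurable β ℬ i).comp (measurable_const.prodMk measurable_id)).pow_const 2)
  set F : ({j : V // j = i} → ℝ) × ({j : V // ¬ j = i} → ℝ) → ℝ :=
    fun p => rfGibbs β ℬ J (e.symm p) i ^ 2 with hF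
  have hFm : Measurable F := hgm.comp e.symm.measurable
  have hFb : ∀ p, ‖F p‖ ≤ 1 := fun p => by
    rw [Real.norm_eq_abs, abs_of_nonneg (sq_nonneg _)]
    exact rfGibbs_sq_le_one β ℬ _ _ i tanh_sq_le_one
  have hFint : Integrable F (P1.prod P2) :=
    Integrable.mono' (integrable_const 1) hFm.aestronglyMeasurable (ae_of_all _ hFb)
  have h1 : ∫ h, rfGibbs β ℬ J h i ^ 2 ∂(Measure.pi fun _ : V => ν1)
      = ∫ p, F p ∂(P1.prod P2) :=
    ((hMP.symm e).integral_comp e.symm.measurableEmbedding _).symm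
  rw [h1, integral_prod_symm F hFint]
  have hinner2 : ∀ y, ∫ x, Real.tanh (β * x) ^ 2 ∂gaussianReal 0 (Λ ^ 2) ≤ ∫ x, F (x, y) ∂P1 := by
    intro y
    have hPU : MeasurePreserving (MeasurableEquiv.piUnique fun _ : {j : V // j = i} => ℝ) P1 ν1 :=
      measurePreserving_piUnique _
    have h2 : ∫ x, F (x, y) ∂P1
        = ∫ t : ℝ, F ((MeasurableEquiv.piUnique fun _ : {j : V // j = i} => ℝ).symm t, y) ∂ν1 :=
      ((hPU.symm _).integral_comp
        (MeasurableEquiv.piUnique fun _ : {j : V // j = i} => ℝ).symm.measurableEmbedding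
        (fun x => F (x, y))).symm
    rw [h2]
    set ht : ℝ → (V → ℝ) := fun t =>
      e.symm ((MeasurableEquiv.piUnique fun _ : {j : V // j = i} => ℝ).symm t, y) with hht
    have hti : ∀ t, ht t i = t := by
      intro t
      simp [hht, he, MeasurableEquiv.piEquivPiSubtypeProd, MeasurableEquiv.piUnique,
        Equiv.piEquivPiSubtypeProd_symm_apply, Equiv.piUnique]
    have hoff : ∀ t t' j, j ≠ i → ht t j = ht t' j := by
      intro t t' j hj
      simp [hht, he, MeasurableEquiv.piEquivPiSubtypeProd,
        Equiv.piEquivPiSubtypeProd_symm_apply, dif_neg hj]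
    set C : ℝ := Real.log (Zpart β ℬ J (ht 0) i true / Zpart β ℬ J (ht 0) i false) / 2 with hC
    have hre : ∀ t, F ((MeasurableEquiv.piUnique fun _ : {j : V // j = i} => ℝ).symm t, y)
        = Real.tanh (β * t + C) ^ 2 := by
      intro t
      show rfGibbs β ℬ J (ht t) i ^ 2 = _
      rw [rfGibbs_eq_tanh, hti t, hC,
        Zpart_congr β ℬ J i true (fun j hj => hoff t 0 j hj),
        Zpart_congr β ℬ J i false (fun j hj => hoff t 0 j hj)]
    simp_rw [hre]
    exact key_gauss_bound hβ hv J0 C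
  calc ∫ x, Real.tanh (β * x) ^ 2 ∂gaussianReal 0 (Λ ^ 2)
      = ∫ _y, (∫ x, Real.tanh (β * x) ^ 2 ∂gaussianReal 0 (Λ ^ 2)) ∂P2 := by
        rw [integral_const, probReal_univ]
        simp
    _ ≤ ∫ y, ∫ x, F (x, y) ∂P1 ∂P2 :=
        integral_mono (integrable_const _) hFint.integral_prod_right hinner2

/-- **Lower bound on the spin-glass order parameter.** In the random-field Ising model with
arbitrary (deterministic or random) interactions `J_B` on sets of size at least two and
independent i.i.d. Gaussian fields `h_i ~ N(J_0, Λ²)`, the spin-glass order parameter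
`q = (1/|V|) ∑_i E[⟨σ_i⟩²]` satisfies `E[tanh²(βh)]_{N(0, Λ²)} ≤ q`. -/
theorem random_field_spin_glass_order_parameter_lower_bound
    {V : Type} [Fintype V] [DecidableEq V] [Nonempty V]
    (ℬ : Finset (Finset V)) (hℬ : ∀ B ∈ ℬ, 2 ≤ B.card)
    (β : ℝ) (hβ : 0 < β)
    (ν : Measure (ℬ → ℝ)) [IsProbabilityMeasure ν]
    (J0 : ℝ) (Λ : NNReal) (hΛ : 0 < Λ)
    (q : ℝ)
    (hq : q = (Fintype.card V : ℝ)⁻¹ * ∑ i : V,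
      ∫ p, rfGibbs β ℬ p.1 p.2 i ^ 2
        ∂(ν.prod (Measure.pi fun _ : V => gaussianReal J0 (Λ ^ 2)))) :
    ∫ x, Real.tanh (β * x) ^ 2 ∂(gaussianReal 0 (Λ ^ 2)) ≤ q := by
  classical
  set μh : Measure (V → ℝ) := Measure.pi fun _ : V => gaussianReal J0 (Λ ^ 2) with hμh
  set L : ℝ := ∫ x, Real.tanh (β * x) ^ 2 ∂gaussianReal 0 (Λ ^ 2) with hL
  have hsite : ∀ i : V, L ≤ ∫ p, rfGibbs β ℬ p.1 p.2 i ^ 2 ∂(ν.prod μh) := by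
    intro i
    have hmeas : Measurable fun p : (ℬ → ℝ) × (V → ℝ) => rfGibbs β ℬ p.1 p.2 i ^ 2 :=
      (rfGibbs_measurable β ℬ i).pow_const 2
    have hint : Integrable (fun p : (ℬ → ℝ) × (V → ℝ) => rfGibbs β ℬ p.1 p.2 i ^ 2)
        (ν.prod μh) := by
      refine Integrable.mono' (integrable_const 1) hmeas.aestronglyMeasurable
        (ae_of_all _ fun p => ?_)
      rw [Real.norm_eq_abs, abs_of_nonneg (sq_nonneg _)]
      exact rfGibbs_sq_le_one β ℬ _ _ i tanh_sq_le_one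
    rw [integral_prod _ hint]
    calc L = ∫ _J, L ∂ν := by rw [integral_const, probReal_univ]; simp
      _ ≤ ∫ J, (∫ h, rfGibbs β ℬ J h i ^ 2 ∂μh) ∂ν :=
          integral_mono (integrable_const L) hint.integral_prod_left
            (fun J => inner_bound hβ ℬ J J0 hΛ.ne' i)
  rw [hq]
  have hcard : (0:ℝ) < (Fintype.card V : ℝ) := by
    exact_mod_cast Fintype.card_pos
  have hsum : (Fintype.card V : ℝ) * L ≤ ∑ i : V,
      ∫ p, rfGibbs β ℬ p.1 p.2 i ^ 2 ∂(ν.prod μh) := by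
    calc (Fintype.card V : ℝ) * L = ∑ _i : V, L := by
          rw [Finset.sum_const, Finset.card_univ, nsmul_eq_mul]
      _ ≤ _ := Finset.sum_le_sum fun i _ => hsite i
  calc L = (Fintype.card V : ℝ)⁻¹ * ((Fintype.card V : ℝ) * L) := by
        field_simp
    _ ≤ (Fintype.card V : ℝ)⁻¹ * ∑ i : V,
          ∫ p, rfGibbs β ℬ p.1 p.2 i ^ 2 ∂(ν.prod μh) := by
        exact mul_le_mul_of_nonneg_left hsum (inv_nonneg.mpr hcard.le)
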